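/- Forward criterion (Sheeran et al.): let φ₀ = ι and φ_{i+1} = post(φ_i). If φ_i ⊆ α for all 0 ≤ i ≤ k (bounded safety up to k) and φ_{k+1} ⊆ φ₀ ∪ φ₁ ∪ ... ∪ φ_k (every state of distance k+1 already appears at smaller distance, i.e., the set of distance-(k+1) states is empty), then every reachable state satisfies α. -/
import Mathlib

theorem stmt_10 {D : Type*} (ι : Set D) (τ : D → D → Prop) (α : Set D)
    (φ : ℕ → Set D) (hφ0 : φ 0 = ι)
    (hφs : ∀ i, φ (i + 1) = {y | ∃ x ∈ φ i, τ x y})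
    (k : ℕ)
    (hbounded : ∀ i ≤ k, φ i ⊆ α)
    (hcrit : φ (k + 1) ⊆ ⋃ i ∈ Finset.range (k + 1), φ i) :
    ∀ y : D, (∃ (n : ℕ) (p : ℕ → D),
      p 0 ∈ ι ∧ (∀ i < n, τ (p i) (p (i + 1))) ∧ p n = y) → y ∈ α := by
  have key : ∀ n, φ n ⊆ ⋃ i ∈ Finset.range (k + 1), φ i := by
    intro n
    induction n using Nat.strong_induction_on with
    | _ n ih =>
      rcases le_or_gt n k with h | h
      · exact Set.subset_biUnion_of_mem (Finset.mem_range.mpr (Nat.lt_succ_of_le h))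
      · obtain ⟨m, rfl⟩ := Nat.exists_eq_add_of_lt h
        intro y hy
        rw [hφs] at hy
        obtain ⟨x, hx, hxy⟩ := hy
        have hx' := ih (k + m) (by omega) hx
        simp only [Set.mem_iUnion, Finset.mem_range] at hx'
        obtain ⟨i, hi, hxi⟩ := hx'
        have : y ∈ φ (i + 1) := by rw [hφs]; exact ⟨x, hxi, hxy⟩
        rcases lt_or_eq_of_le (Nat.lt_succ_iff.mp hi) with hik | hik
        · exact Set.mem_biUnion (Finset.mem_range.mpr (by omega)) this
        · subst hik; exact hcrit this
  rintro y ⟨n, p, h0, hstep, rfl⟩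
  have hpn : ∀ m ≤ n, p m ∈ φ m := by
    intro m hm
    induction m with
    | zero => rw [hφ0]; exact h0
    | succ m ihm =>
      rw [hφs]
      exact ⟨p m, ihm (by omega), hstep m (by omega)⟩
  have := key n (hpn n le_rfl)
  simp only [Set.mem_iUnion, Finset.mem_range] at this
  obtain ⟨i, hi, hmem⟩ := this
  exact hbounded i (by omega) hmem
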